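/- Let A be a closed subalgebra of C(X) separating points and containing constants, with A ≠ C(X). Then the restriction of A to its Šilov boundary is not all of C(Sh(A)). -/

import Mathlib

open Set

/-- `H` is a (closed) boundary for `A`: `‖f‖_H = ‖f‖` for all `f ∈ A`. -/
noncomputable def IsBoundary {X : Type*} [TopologicalSpace X] [CompactSpace X]
    (A : Subalgebra ℂ C(X, ℂ)) (H : Set X) : Prop :=
  IsClosed H ∧ ∀ f ∈ A, sSup ((fun x => ‖f x‖) '' H) = ‖f‖

/-- The restriction algebra `A↾S`. -/
def restrictSet {X : Type*} [TopologicalSpace X] (A : Subalgebra ℂ C(X, ℂ)) (S : Set X) :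
    Set C(S, ℂ) :=
  {g | ∃ f ∈ A, f.restrict S = g}

/-- If `A ≤ C(X, ℂ)` is a closed proper subalgebra separating points, and `S` is its
Šilov boundary (smallest closed boundary), then `A↾S ≠ C(S, ℂ)`. -/
theorem stmt7 {X : Type*} [TopologicalSpace X] [CompactSpace X] [T2Space X]
    (A : Subalgebra ℂ C(X, ℂ)) (hA : A.SeparatesPoints)
    (hAcl : IsClosed (A : Set C(X, ℂ))) (hAne : A ≠ ⊤)
    (S : Set X) (hSb : IsBoundary A S) (hSmin : ∀ T : Set X, IsBoundary A T → S ⊆ T) :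
    restrictSet A S ≠ Set.univ := by
  intro hres
  obtain ⟨hScl, hSnorm⟩ := hSb
  -- X is nonempty
  rcases isEmpty_or_nonempty X with hX | hX
  · refine hAne (eq_top_iff.mpr fun f _ => ?_)
    have : f = 0 := ContinuousMap.ext fun x => hX.elim x
    rw [this]; exact zero_mem A
  -- S is nonempty
  have hSne : S.Nonempty := by
    by_contra h
    rw [Set.not_nonempty_iff_eq_empty] at h
    have h1 := hSnorm 1 (one_mem A)
    rw [h, Set.image_empty, Real.sSup_empty] at h1
    simp [norm_one] at h1
  -- S ≠ univ, else A = ⊤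
  have hSu : S ≠ Set.univ := by
    intro hu
    apply hAne
    rw [eq_top_iff]
    intro f _
    have : f.restrict S ∈ restrictSet A S := hres ▸ Set.mem_univ _
    obtain ⟨f', hf', hrest⟩ := this
    have : f' = f := by
      ext x
      have := DFunLike.congr_fun hrest (⟨x, hu ▸ Set.mem_univ x⟩ : S)
      simpa using this
    exact this ▸ hf'
  obtain ⟨p, hp⟩ : ∃ p, p ∉ S := by
    by_contra h
    push_neg at h
    exact hSu (Set.eq_univ_of_forall h)
  haveI : CompactSpace S := isCompact_iff_compactSpace.mp hScl.isCompact
  haveI : Nonempty S := hSne.to_subtype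
  -- norms on A agree with restrictions
  have hnorm : ∀ f ∈ A, ‖f.restrict S‖ = ‖f‖ := by
    intro f hf
    rw [← hSnorm f hf, sSup_image', ContinuousMap.norm_eq_iSup_norm]
    rfl
  -- the restriction alg hom on A
  let ρ : A →ₐ[ℂ] C(S, ℂ) :=
    (ContinuousMap.compRightAlgHom ℂ ℂ ⟨Subtype.val, continuous_subtype_val⟩).comp A.val
  have hρ : ∀ f : A, ρ f = (f : C(X, ℂ)).restrict S := fun f => rfl
  have hbij : Function.Bijective ρ := by
    constructor
    · intro f g hfg
      rw [hρ, hρ] at hfg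
      have h1 : ((f : C(X, ℂ)) - g).restrict S = 0 := by
        ext x
        simpa [sub_eq_zero] using DFunLike.congr_fun hfg x
      have h2 : ‖(f : C(X, ℂ)) - (g : C(X, ℂ))‖ = 0 := by
        rw [← hnorm _ (sub_mem f.2 g.2), h1, norm_zero]
      have : (f : C(X, ℂ)) = g := by
        rwa [norm_eq_zero, sub_eq_zero] at h2
      exact Subtype.ext this
    · intro g
      have : g ∈ restrictSet A S := hres ▸ Set.mem_univ _
      obtain ⟨f, hf, hrest⟩ := this
      exact ⟨⟨f, hf⟩, hrest⟩
  let e : A ≃ₐ[ℂ] C(S, ℂ) := AlgEquiv.ofBijective ρ hbij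
  -- evaluation at p through the inverse
  let φ : C(S, ℂ) →ₐ[ℂ] ℂ :=
    ((ContinuousMap.evalAlgHom ℂ ℂ p).comp A.val).comp e.symm.toAlgHom
  -- φ is a character, hence evaluation at some q ∈ S
  obtain ⟨q, hq⟩ := (WeakDual.CharacterSpace.homeoEval (X := S) (𝕜 := ℂ)).surjective
    (WeakDual.CharacterSpace.equivAlgHom.symm φ)
  have hq' : ∀ g : C(S, ℂ), g q = φ g := by
    intro g
    have := DFunLike.congr_fun (congrArg Subtype.val hq) g
    simpa [WeakDual.CharacterSpace.homeoEval, Continuous.homeoOfEquivCompactToT2] using this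
  -- p ≠ q, separate
  have hpq : (q : X) ≠ p := fun h => hp (h ▸ q.2)
  obtain ⟨_, ⟨f, hf, rfl⟩, hfpq⟩ := hA hpq
  -- compute φ (f.restrict S) = f p
  have h1 : φ ((f : C(X, ℂ)).restrict S) = f p := by
    have : e ⟨f, hf⟩ = (f : C(X, ℂ)).restrict S := rfl
    rw [← this]
    simp [φ, AlgEquiv.symm_apply_apply]
  have h2 := hq' ((f : C(X, ℂ)).restrict S)
  rw [h1] at h2
  simp [ContinuousMap.restrict] at h2
  exact hfpq h2
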